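/- Countable-closure criterion for transfinite approximations: let γ be a countable ordinal and let (x_s)_{s ≤ γ} be a family of elements of 2^ℕ such that for every limit ordinal s ≤ γ, the set {n ∈ ℕ : lim_{t→s} x_t(n) does not exist} is finite (where lim_{t→s} x_t(n) exists means x_t(n) is eventually constant on a final segment of the ordinals below s). Then the topological closure of {x_s : s ≤ γ} in 2^ℕ is countable, and hence compact and Lebesgue-null. -/

import Mathlib

open MeasureTheory

/-- The cylinder of infinite binary sequences extending the finite string `σ`. -/
def cyl (σ : List Bool) : Set (ℕ → Bool) :=
  {X | ∀ i, (h : i < σ.length) → X i = σ.get ⟨i, h⟩}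

/-- `μ` is the fair-coin measure: each cylinder `[σ]` has measure `2^{-|σ|}`. -/
def IsFairCoin (μ : Measure (ℕ → Bool)) : Prop :=
  ∀ σ : List Bool, μ (cyl σ) = (1 / 2) ^ σ.length

open Filter Topology

/-- Singletons are null for the fair-coin measure. -/
lemma fairCoin_singleton_null (μ : Measure (ℕ → Bool)) (hμ : IsFairCoin μ)
    (y : ℕ → Bool) : μ {y} = 0 := by
  have hle : ∀ k : ℕ, μ {y} ≤ (1 / 2 : ENNReal) ^ k := by
    intro k
    have hsub : ({y} : Set (ℕ → Bool)) ⊆ cyl (List.ofFn fun i : Fin k => y i) := by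
      rintro z rfl
      intro i h
      simp
    calc μ {y} ≤ μ (cyl (List.ofFn fun i : Fin k => y i)) := measure_mono hsub
      _ = (1 / 2 : ENNReal) ^ (List.ofFn fun i : Fin k => y i).length := hμ _
      _ = (1 / 2 : ENNReal) ^ k := by rw [List.length_ofFn]
  have h0 : Tendsto (fun k : ℕ => (1 / 2 : ENNReal) ^ k) atTop (𝓝 0) :=
    ENNReal.tendsto_pow_atTop_nhds_zero_of_lt_one (by norm_num)
  exact le_antisymm (ge_of_tendsto' h0 hle) zero_le

/-- Countable-closure criterion for transfinite approximations: if along each limit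
ordinal `s ≤ γ` the coordinatewise limit of `x_t` (`t → s`) fails to exist at only
finitely many coordinates, then the closure of `{x_s : s ≤ γ}` is countable,
compact, and null. -/
theorem stmt_14 (μ : Measure (ℕ → Bool)) (hμ : IsFairCoin μ)
    (γ : Ordinal) (hγ : γ.card ≤ Cardinal.aleph0)
    (x : Ordinal → (ℕ → Bool))
    (hlim : ∀ s ≤ γ, Order.IsSuccLimit s →
      {n : ℕ | ¬ ∃ (i : Bool) (t₀ : Ordinal), t₀ < s ∧
        ∀ t, t₀ ≤ t → t < s → x t n = i}.Finite) :
    (closure (x '' Set.Iic γ)).Countable ∧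
      IsCompact (closure (x '' Set.Iic γ)) ∧
      μ (closure (x '' Set.Iic γ)) = 0 := by
  -- the set `Iic γ` of ordinals is countable
  have hIic : (Set.Iic γ).Countable := by
    rw [Set.countable_coe_iff.symm, ← Cardinal.mk_le_aleph0_iff]
    have h1 : (Set.Iic γ : Set Ordinal) = Set.Iio (Order.succ γ) := by
      ext t; simp [Order.lt_succ_iff]
    rw [h1, Ordinal.mk_Iio_ordinal, Cardinal.lift_le_aleph0, Ordinal.card_succ]
    exact Cardinal.add_le_aleph0.2 ⟨hγ, (Cardinal.one_lt_aleph0).le⟩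
  -- the sets of "limit values" at limit ordinals
  set A : Ordinal → Set (ℕ → Bool) := fun s =>
    {y | ∀ n i t₀, t₀ < s → (∀ t, t₀ ≤ t → t < s → x t n = i) → y n = i} with hA
  set L : Set Ordinal := {s | s ≤ γ ∧ Order.IsSuccLimit s} with hL
  -- each A s (s limit ≤ γ) is finite
  have hAfin : ∀ s ∈ L, (A s).Finite := by
    rintro s ⟨hsγ, hslim⟩
    have hB := hlim s hsγ hslim
    set B := {n : ℕ | ¬ ∃ (i : Bool) (t₀ : Ordinal), t₀ < s ∧
      ∀ t, t₀ ≤ t → t < s → x t n = i} with hBdef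
    have : Finite ↥B := hB.to_subtype
    apply Set.Finite.of_finite_image (f := fun y (n : ↥B) => y n.1)
    · exact Set.toFinite _
    · intro y₁ h₁ y₂ h₂ heq
      funext n
      by_cases hn : n ∈ B
      · exact congrFun heq ⟨n, hn⟩
      · obtain ⟨i, t₀, ht₀, ht⟩ := not_not.mp hn
        rw [h₁ n i t₀ ht₀ ht, h₂ n i t₀ ht₀ ht]
  -- the key inclusion
  have key : closure (x '' Set.Iic γ) ⊆ (x '' Set.Iic γ) ∪ ⋃ s ∈ L, A s := by
    intro y hy
    obtain ⟨u, hu, hconv⟩ := mem_closure_iff_seq_limit.mp hy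
    have hchoice : ∀ k, ∃ t, t ≤ γ ∧ x t = u k := by
      intro k; obtain ⟨t, ht, hxt⟩ := hu k; exact ⟨t, ht, hxt⟩
    choose f hfle hfx using hchoice
    have hconv' : Tendsto (fun k => x (f k)) atTop (𝓝 y) := by
      simpa only [hfx] using hconv
    -- monotone subsequence
    have hPWO : (Set.univ : Set Ordinal).IsPWO :=
      (Set.isWF_univ_iff.mpr inferInstance).isPWO
    obtain ⟨g, hg⟩ := hPWO.exists_monotone_subseq (f := f) (fun _ => Set.mem_univ _)
    have hconvg : Tendsto (fun k => x (f (g k))) atTop (𝓝 y) :=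
      hconv'.comp g.strictMono.tendsto_atTop
    by_cases hc : ∃ k, ∀ j, k ≤ j → f (g j) = f (g k)
    · -- eventually constant: y is in the image
      obtain ⟨k, hk⟩ := hc
      left
      have : Tendsto (fun _ : ℕ => x (f (g k))) atTop (𝓝 y) := by
        apply hconvg.congr'
        filter_upwards [eventually_ge_atTop k] with j hj
        rw [hk j hj]
      have hxy : x (f (g k)) = y := tendsto_nhds_unique tendsto_const_nhds this
      exact ⟨f (g k), hfle _, hxy⟩
    · -- strictly increasing cofinally: supremum is a limit ordinal
      push_neg at hc
      right
      set s : Ordinal := ⨆ k, f (g k) with hs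
      have hlt : ∀ k, f (g k) < s := by
        intro k
        obtain ⟨j, hjk, hne⟩ := hc k
        have hle : f (g k) ≤ f (g j) := hg hjk
        exact lt_of_lt_of_le (lt_of_le_of_ne hle (Ne.symm hne))
          (Ordinal.le_iSup (fun k => f (g k)) j)
      have hsγ : s ≤ γ := Ordinal.iSup_le fun k => hfle _
      have hslim : Order.IsSuccLimit s := by
        rw [Ordinal.isSuccLimit_iff]
        constructor
        · intro h0
          exact absurd (h0 ▸ hlt 0) (by simp [not_lt_zero])
        · refine Order.isSuccPrelimit_of_succ_lt ?_
          intro a ha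
          obtain ⟨k, hk⟩ := Ordinal.lt_iSup_iff.mp ha
          exact lt_of_le_of_lt (Order.succ_le_of_lt hk) (hlt k)
      refine Set.mem_biUnion (show s ∈ L from ⟨hsγ, hslim⟩) ?_
      intro n i t₀ ht₀ ht
      -- coordinatewise convergence
      have hcoord : Tendsto (fun k => x (f (g k)) n) atTop (𝓝 (y n)) :=
        (tendsto_pi_nhds.mp hconvg) n
      obtain ⟨k₀, hk₀⟩ := Ordinal.lt_iSup_iff.mp ht₀
      have hev : Tendsto (fun _ : ℕ => i) atTop (𝓝 (y n)) := by
        apply hcoord.congr'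
        filter_upwards [eventually_ge_atTop k₀] with j hj
        exact ht _ (le_trans hk₀.le (hg hj)) (hlt j)
      exact tendsto_nhds_unique hev tendsto_const_nhds
  -- countability
  have hcount : (closure (x '' Set.Iic γ)).Countable := by
    apply Set.Countable.mono key
    exact (hIic.image x).union
      ((hIic.mono (fun t ht => ht.1)).biUnion fun s hs => (hAfin s hs).countable)
  refine ⟨hcount, isClosed_closure.isCompact, ?_⟩
  rw [← Set.biUnion_of_singleton (closure (x '' Set.Iic γ))]
  exact (measure_biUnion_null_iff hcount).2 fun y _ => fairCoin_singleton_null μ hμ y
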